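/- If an element g of G_A can be represented by a word over {a, a⁻¹, b, b⁻¹, c, c⁻¹} whose exponent sum ord(w) equals 0, then g ∈ W. In particular g³ = 1, and any two elements of G_A representable by words of exponent sum 0 commute with each other. -/

import Mathlib

/-!
We formalize the automaton `A` of the paper: alphabet `X = {1,2,3}` is encoded as
`Fin 3` (letter `i+1` ↦ `i`), states `a, b, c` are encoded as `0, 1, 2 : Fin 3`.
Each state induces a permutation of the space `ℕ → Fin 3` of infinite sequences.

Note on conventions: in the paper, products of tree automorphisms compose
left-to-right (in a word `s₁s₂⋯sₙ`, the letter `s₁` acts first); in Mathlib,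
`(f * g) w = f (g w)`, i.e. the right factor acts first.  Hence a paper word
`uv` is rendered as the Lean product `v * u`; e.g. the paper's `α = ab⁻¹`
(apply `a`, then `b⁻¹`) is `b⁻¹ * a` below.
-/

namespace Lamplighter

section Generic

variable {S X : Type*}

/-- The state of the automaton after reading the first `n` letters of `w`, starting at `s`. -/
def run (nxt : S → X → S) (s : S) (w : ℕ → X) : ℕ → S
  | 0 => s
  | n + 1 => nxt (run nxt s w n) (w n)

/-- The output sequence of the automaton started in state `s` reading `w`. -/
def fwd (nxt : S → X → S) (out : S → Equiv.Perm X) (s : S) (w : ℕ → X) : ℕ → X :=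
  fun n => out (run nxt s w n) (w n)

/-- Transition function of the inverse automaton. -/
def invNxt (nxt : S → X → S) (out : S → Equiv.Perm X) (s : S) (y : X) : S :=
  nxt s ((out s).symm y)

/-- The action of the inverse automaton, started at state `s`. -/
def bwd (nxt : S → X → S) (out : S → Equiv.Perm X) (s : S) (y : ℕ → X) : ℕ → X :=
  fun n => (out (run (invNxt nxt out) s y n)).symm (y n)

theorem run_inv_fwd (nxt : S → X → S) (out : S → Equiv.Perm X) (s : S) (w : ℕ → X) :
    ∀ n, run (invNxt nxt out) s (fwd nxt out s w) n = run nxt s w n := by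
  intro n
  induction n with
  | zero => rfl
  | succ n ih => simp [run, ih, invNxt, fwd]

theorem run_bwd (nxt : S → X → S) (out : S → Equiv.Perm X) (s : S) (y : ℕ → X) :
    ∀ n, run nxt s (bwd nxt out s y) n = run (invNxt nxt out) s y n := by
  intro n
  induction n with
  | zero => rfl
  | succ n ih => simp [run, ih, bwd, invNxt]

/-- The permutation of the space of infinite sequences induced by state `s`
of an invertible automaton. -/
def statePerm (nxt : S → X → S) (out : S → Equiv.Perm X) (s : S) : Equiv.Perm (ℕ → X) where
  toFun := fwd nxt out s
  invFun := bwd nxt out s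
  left_inv := fun w => funext fun n => by simp [bwd, run_inv_fwd, fwd]
  right_inv := fun y => funext fun n => by simp [fwd, run_bwd, bwd]

end Generic

/-- The alphabet `X = {1,2,3}`, encoded as `Fin 3`. -/
abbrev X3 := Fin 3

/-- Transition function of the automaton `A` (states `a = 0`, `b = 1`, `c = 2`):
from `a`: `1 ↦ a, 2 ↦ b, 3 ↦ c`; from `b`: `1 ↦ c, 2 ↦ a, 3 ↦ b`;
from `c`: `1 ↦ b, 2 ↦ c, 3 ↦ a`. -/
def nxtA : Fin 3 → X3 → Fin 3 := ![![0, 1, 2], ![2, 0, 1], ![1, 2, 0]]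

/-- Output permutations of the automaton `A`: state `a` acts on letters as the
transposition `(2 3)`, state `b` as `(1 3)`, state `c` as `(1 2)`. -/
def outA : Fin 3 → Equiv.Perm X3 := ![Equiv.swap 1 2, Equiv.swap 0 2, Equiv.swap 0 1]

/-- The permutation of `X^ℕ` given by state `a`. -/
def a : Equiv.Perm (ℕ → X3) := statePerm nxtA outA 0

/-- The permutation of `X^ℕ` given by state `b`. -/
def b : Equiv.Perm (ℕ → X3) := statePerm nxtA outA 1

/-- The permutation of `X^ℕ` given by state `c`. -/
def c : Equiv.Perm (ℕ → X3) := statePerm nxtA outA 2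

/-- The group `G_A` generated by the automaton `A`. -/
def GA : Subgroup (Equiv.Perm (ℕ → X3)) := Subgroup.closure {a, b, c}

/-- The element `α = ab⁻¹` of the paper (first apply `a`, then `b⁻¹`). -/
def α : Equiv.Perm (ℕ → X3) := b⁻¹ * a

/-- The set `W` of permutations acting coordinatewise by a sequence of even
permutations of the alphabet. -/
def W : Set (Equiv.Perm (ℕ → X3)) :=
  {g | ∃ π : ℕ → Equiv.Perm X3, (∀ n, Equiv.Perm.sign (π n) = 1) ∧
    ∀ (w : ℕ → X3) (n : ℕ), g w n = π n (w n)}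

/-- The subgroup `N` generated by the conjugates `a⁻ⁿ α aⁿ`, `n ∈ ℤ`
(in Lean's composition order: `aⁿ * α * a⁻ⁿ`). -/
def N : Subgroup (Equiv.Perm (ℕ → X3)) :=
  Subgroup.closure {g | ∃ n : ℤ, g = a ^ n * α * a ^ (-n)}

/-- The generators `a, b, c` indexed by `Fin 3`. -/
def gens : Fin 3 → Equiv.Perm (ℕ → X3) := ![a, b, c]

/-- A word over `{a, a⁻¹, b, b⁻¹, c, c⁻¹}` is a list of pairs `(i, e)` where `i`
names the generator and `e = true` means exponent `+1`, `e = false` exponent `-1`. -/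
def letterOf (p : Fin 3 × Bool) : Equiv.Perm (ℕ → X3) :=
  if p.2 then gens p.1 else (gens p.1)⁻¹

/-- Evaluation of a word, letters acting left-to-right as in the paper
(so the Lean product is taken over the reversed list). -/
def evalWord (l : List (Fin 3 × Bool)) : Equiv.Perm (ℕ → X3) :=
  ((l.map letterOf).reverse).prod

/-- `ord w`: the sum of the exponents of the letters of the word `w`. -/
def ordWord (l : List (Fin 3 × Bool)) : ℤ :=
  (l.map fun p => if p.2 then (1 : ℤ) else -1).sum


section Proof5

lemma nxtA_eq (s x : Fin 3) : nxtA s x = x - s := by revert s x; decide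

lemma invNxtA_eq (s y : Fin 3) : invNxt nxtA outA s y = s - y := by revert s y; decide

lemma outA_eq (s x : Fin 3) : outA s x = -x - s := by revert s x; decide

lemma outA_symm_eq (s x : Fin 3) : (outA s).symm x = -x - s := by revert s x; decide

lemma runF_add (s t : Fin 3) (w f : ℕ → X3) (n : ℕ) :
    run nxtA (s + t) (w + f) n = run nxtA s w n + run nxtA t f n := by
  induction n with
  | zero => rfl
  | succ n ih =>
      simp only [run, ih, nxtA_eq, Pi.add_apply]
      abel

lemma runB_add (s t : Fin 3) (w f : ℕ → X3) (n : ℕ) :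
    run (invNxt nxtA outA) (s + t) (w + f) n =
      run (invNxt nxtA outA) s w n + run (invNxt nxtA outA) t f n := by
  induction n with
  | zero => rfl
  | succ n ih =>
      simp only [run, ih, invNxtA_eq, Pi.add_apply]
      abel

lemma a_apply (w : ℕ → X3) (n : ℕ) : a w n = -(w n) - run nxtA 0 w n := by
  show fwd nxtA outA 0 w n = _
  rw [fwd, outA_eq]

lemma b_apply (w : ℕ → X3) (n : ℕ) : b w n = -(w n) - run nxtA 1 w n := by
  show fwd nxtA outA 1 w n = _
  rw [fwd, outA_eq]

lemma c_apply (w : ℕ → X3) (n : ℕ) : c w n = -(w n) - run nxtA 2 w n := by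
  show fwd nxtA outA 2 w n = _
  rw [fwd, outA_eq]

lemma a_inv_apply (w : ℕ → X3) (n : ℕ) :
    a⁻¹ w n = -(w n) - run (invNxt nxtA outA) 0 w n := by
  show bwd nxtA outA 0 w n = _
  rw [bwd, outA_symm_eq]

/-- The effect of conjugating a coordinatewise shift through `a`. -/
def Phi (f : ℕ → X3) : ℕ → X3 := fun n => -(f n) - run nxtA 0 f n

/-- The effect of conjugating a coordinatewise shift through `a⁻¹`. -/
def Psi (f : ℕ → X3) : ℕ → X3 := fun n => -(f n) - run (invNxt nxtA outA) 0 f n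

lemma a_mul_addRight (f : ℕ → X3) :
    a * Equiv.addRight f = Equiv.addRight (Phi f) * a := by
  refine Equiv.ext fun w => funext fun n => ?_
  have h := runF_add 0 0 w f n
  rw [add_zero] at h
  simp only [Equiv.Perm.mul_apply, Equiv.coe_addRight, a_apply, Pi.add_apply, h, Phi]
  abel

lemma a_inv_mul_addRight (f : ℕ → X3) :
    a⁻¹ * Equiv.addRight f = Equiv.addRight (Psi f) * a⁻¹ := by
  refine Equiv.ext fun w => funext fun n => ?_
  have h := runB_add 0 0 w f n
  rw [add_zero] at h
  simp only [Equiv.Perm.mul_apply, Equiv.coe_addRight, a_inv_apply, Pi.add_apply, h, Psi]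
  abel

/-- The coordinatewise shift turning `a` into `b`. -/
def g1 : ℕ → X3 := fun n => -(run nxtA 1 0 n)

/-- The coordinatewise shift turning `a` into `c`. -/
def g2 : ℕ → X3 := fun n => -(run nxtA 2 0 n)

lemma b_eq : b = Equiv.addRight g1 * a := by
  refine Equiv.ext fun w => funext fun n => ?_
  have h := runF_add 0 1 w 0 n
  rw [zero_add, add_zero] at h
  simp only [Equiv.Perm.mul_apply, Equiv.coe_addRight, a_apply, b_apply, Pi.add_apply, h, g1]
  abel

lemma c_eq : c = Equiv.addRight g2 * a := by
  refine Equiv.ext fun w => funext fun n => ?_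
  have h := runF_add 0 2 w 0 n
  rw [zero_add, add_zero] at h
  simp only [Equiv.Perm.mul_apply, Equiv.coe_addRight, a_apply, c_apply, Pi.add_apply, h, g2]
  abel

lemma addRight_mul (f g : ℕ → X3) :
    Equiv.addRight f * Equiv.addRight g = Equiv.addRight (g + f) := by
  refine Equiv.ext fun w => funext fun n => ?_
  simp [add_assoc]

lemma addRight_zero : Equiv.addRight (0 : ℕ → X3) = 1 := by
  refine Equiv.ext fun w => funext fun n => ?_
  simp

lemma addRight_inv (f : ℕ → X3) : (Equiv.addRight f)⁻¹ = Equiv.addRight (-f) := by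
  refine inv_eq_of_mul_eq_one_right ?_
  rw [addRight_mul, neg_add_cancel, addRight_zero]

lemma pow_mul_addRight :
    ∀ (m : ℤ) (g : ℕ → X3), ∃ h, a ^ m * Equiv.addRight g = Equiv.addRight h * a ^ m := by
  intro m
  induction m using Int.induction_on with
  | zero => exact fun g => ⟨g, by simp⟩
  | succ n ih =>
      intro g
      obtain ⟨h, hh⟩ := ih (Phi g)
      refine ⟨h, ?_⟩
      rw [zpow_add_one, mul_assoc, a_mul_addRight, ← mul_assoc, hh, mul_assoc]
  | pred n ih =>
      intro g
      obtain ⟨h, hh⟩ := ih (Psi g)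
      refine ⟨h, ?_⟩
      rw [zpow_sub_one, mul_assoc, a_inv_mul_addRight, ← mul_assoc, hh, mul_assoc]

lemma letterOf_eq (p : Fin 3 × Bool) :
    ∃ g : ℕ → X3, letterOf p = Equiv.addRight g * a ^ (if p.2 then (1 : ℤ) else -1) := by
  obtain ⟨i, e⟩ := p
  fin_cases i <;> cases e
  · -- a⁻¹
    refine ⟨0, ?_⟩
    show a⁻¹ = _ * a ^ (-1 : ℤ)
    rw [addRight_zero, one_mul, zpow_neg_one]
  · -- a
    refine ⟨0, ?_⟩
    show a = _ * a ^ (1 : ℤ)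
    rw [addRight_zero, one_mul, zpow_one]
  · -- b⁻¹
    refine ⟨Psi (-g1), ?_⟩
    show b⁻¹ = _ * a ^ (-1 : ℤ)
    rw [b_eq, mul_inv_rev, addRight_inv, a_inv_mul_addRight, zpow_neg_one]
  · -- b
    refine ⟨g1, ?_⟩
    show b = _ * a ^ (1 : ℤ)
    rw [zpow_one]; exact b_eq
  · -- c⁻¹
    refine ⟨Psi (-g2), ?_⟩
    show c⁻¹ = _ * a ^ (-1 : ℤ)
    rw [c_eq, mul_inv_rev, addRight_inv, a_inv_mul_addRight, zpow_neg_one]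
  · -- c
    refine ⟨g2, ?_⟩
    show c = _ * a ^ (1 : ℤ)
    rw [zpow_one]; exact c_eq

lemma evalWord_cons (p : Fin 3 × Bool) (l : List (Fin 3 × Bool)) :
    evalWord (p :: l) = evalWord l * letterOf p := by
  simp [evalWord, List.prod_append]

lemma evalWord_eq (l : List (Fin 3 × Bool)) :
    ∃ f : ℕ → X3, evalWord l = Equiv.addRight f * a ^ (ordWord l) := by
  induction l with
  | nil =>
      refine ⟨0, ?_⟩
      rw [show ordWord [] = 0 from rfl, zpow_zero, addRight_zero, one_mul]
      rfl
  | cons p l ih =>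
      obtain ⟨f, hf⟩ := ih
      obtain ⟨g, hg⟩ := letterOf_eq p
      obtain ⟨h, hh⟩ := pow_mul_addRight (ordWord l) g
      refine ⟨h + f, ?_⟩
      have hord : ordWord (p :: l) = ordWord l + (if p.2 then (1 : ℤ) else -1) := by
        simp [ordWord, add_comm]
      rw [evalWord_cons, hf, hg, hord, zpow_add, ← mul_assoc, mul_assoc (Equiv.addRight f),
        hh, ← mul_assoc, addRight_mul, mul_assoc]

end Proof5

/-- If an element `g` of `G_A` is represented by a word over
`{a^{±1}, b^{±1}, c^{±1}}` of exponent sum `0`, then `g ∈ W`; in particular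
`g³ = 1` and any two such elements commute. -/
theorem ord_zero_mem_W :
    (∀ l : List (Fin 3 × Bool), ordWord l = 0 → evalWord l ∈ W) ∧
    (∀ l : List (Fin 3 × Bool), ordWord l = 0 → (evalWord l) ^ 3 = 1) ∧
    (∀ l l' : List (Fin 3 × Bool), ordWord l = 0 → ordWord l' = 0 →
      Commute (evalWord l) (evalWord l')) := by
  have key : ∀ l : List (Fin 3 × Bool), ordWord l = 0 →
      ∃ f : ℕ → X3, evalWord l = Equiv.addRight f := by
    intro l h
    obtain ⟨f, hf⟩ := evalWord_eq l
    rw [h, zpow_zero, mul_one] at hf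
    exact ⟨f, hf⟩
  have sign1 : ∀ c : Fin 3, Equiv.Perm.sign (Equiv.addRight c) = 1 := by decide
  have h3 : ∀ x y : Fin 3, x + y + y + y = x := by decide
  refine ⟨?_, ?_, ?_⟩
  · intro l h
    obtain ⟨f, hf⟩ := key l h
    exact ⟨fun n => Equiv.addRight (f n), fun n => sign1 _,
      fun w n => by rw [hf]; simp⟩
  · intro l h
    obtain ⟨f, hf⟩ := key l h
    rw [hf]
    refine Equiv.ext fun w => funext fun n => ?_
    show ((Equiv.addRight f) ^ 3) w n = (1 : Equiv.Perm (ℕ → X3)) w n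
    simp only [pow_succ, pow_zero, one_mul, Equiv.Perm.mul_apply, Equiv.coe_addRight,
      Pi.add_apply, Equiv.Perm.one_apply]
    exact h3 _ _
  · intro l l' h h'
    obtain ⟨f, hf⟩ := key l h
    obtain ⟨f', hf'⟩ := key l' h'
    show _ * _ = _ * _
    rw [hf, hf', addRight_mul, addRight_mul, add_comm]


end Lamplighter
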